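/- Let V₁ and V₂ be vector spaces over ℂ, let d₁ : V₁ → V₁ and d₂ : V₂ → V₂ be linear maps with d₁ ∘ d₁ = 0 and d₂ ∘ d₂ = 0, and let ε : V₁ → V₁ be a linear map with ε ∘ ε = id and ε ∘ d₁ = −(d₁ ∘ ε). Define the linear map d : V₁ ⊗ V₂ → V₁ ⊗ V₂ by d = d₁ ⊗ id + ε ⊗ d₂. Then d ∘ d = 0, the subspace (ker d₁) ⊗ (ker d₂) of V₁ ⊗ V₂ is contained in ker d, the composite map (ker d₁) ⊗ (ker d₂) → ker d → (ker d)/(im d) kills (im d₁) ⊗ (ker d₂) + (ker d₁) ⊗ (im d₂), and the induced canonical linear map ((ker d₁)/(im d₁)) ⊗ ((ker d₂)/(im d₂)) → (ker d)/(im d) is a linear isomorphism. -/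

import Mathlib

open TensorProduct

private lemma exists_homotopy {V : Type*} [AddCommGroup V] [Module ℂ V]
    (d : V →ₗ[ℂ] V) (hdd : ∀ x, d (d x) = 0) :
    ∃ h p : V →ₗ[ℂ] V,
      (∀ x, d (p x) = 0) ∧ (∀ x, p (d x) = 0) ∧
      (∀ x, d (h x) + h (d x) = x - p x) := by
  obtain ⟨s, hs⟩ := d.rangeRestrict.exists_rightInverse_of_surjective
    (LinearMap.range_eq_top.2 d.surjective_rangeRestrict)
  obtain ⟨q, hq⟩ := Submodule.exists_isCompl (LinearMap.range d)
  set π := (LinearMap.range d).projectionOnto q hq with hπ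
  set h : V →ₗ[ℂ] V := s ∘ₗ (π : V →ₗ[ℂ] LinearMap.range d)
  have key : ∀ x, d (h (d x)) = d x := by
    intro x
    have h1 : π (d x) = ⟨d x, LinearMap.mem_range_self d x⟩ := by
      simpa using Submodule.linearProjOfIsCompl_apply_left hq
        (⟨d x, LinearMap.mem_range_self d x⟩ : LinearMap.range d)
    have h2 : ∀ w : LinearMap.range d, d (s w) = (w : V) := by
      intro w
      have := LinearMap.congr_fun hs w
      simpa [LinearMap.rangeRestrict, Subtype.ext_iff] using congrArg Subtype.val this
    show d (s (π (d x))) = d x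
    rw [h1, h2]
  refine ⟨h, LinearMap.id - (d ∘ₗ h + h ∘ₗ d), ?_, ?_, ?_⟩
  · intro x
    simp only [LinearMap.sub_apply, LinearMap.id_apply, LinearMap.add_apply, LinearMap.comp_apply,
      map_sub, map_add]
    rw [hdd, key]
    abel
  · intro x
    simp only [LinearMap.sub_apply, LinearMap.id_apply, LinearMap.add_apply, LinearMap.comp_apply]
    rw [hdd, key, map_zero]
    abel
  · intro x
    simp only [LinearMap.sub_apply, LinearMap.id_apply, LinearMap.add_apply, LinearMap.comp_apply]
    abel

set_option maxHeartbeats 4000000 in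
/-- Künneth lemma for two-term complexes (Lemma 3.1), with the super sign rule
encoded by the parity involution `ε` of `V₁`. -/
theorem kunneth_two_term
    {V₁ V₂ : Type*} [AddCommGroup V₁] [Module ℂ V₁] [AddCommGroup V₂] [Module ℂ V₂]
    (d₁ : V₁ →ₗ[ℂ] V₁) (d₂ : V₂ →ₗ[ℂ] V₂)
    (hd₁ : d₁ ∘ₗ d₁ = 0) (hd₂ : d₂ ∘ₗ d₂ = 0)
    (ε : V₁ →ₗ[ℂ] V₁) (hε : ε ∘ₗ ε = LinearMap.id) (hεd : ε ∘ₗ d₁ = -(d₁ ∘ₗ ε))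
    (d : V₁ ⊗[ℂ] V₂ →ₗ[ℂ] V₁ ⊗[ℂ] V₂)
    (hd : d = TensorProduct.map d₁ LinearMap.id + TensorProduct.map ε d₂) :
    d ∘ₗ d = 0 ∧
    LinearMap.range
        (TensorProduct.map (LinearMap.ker d₁).subtype (LinearMap.ker d₂).subtype) ≤
      LinearMap.ker d ∧
    (∀ (a : LinearMap.ker d₁) (b : LinearMap.ker d₂)
        (h : (a : V₁) ⊗ₜ[ℂ] (b : V₂) ∈ LinearMap.ker d),
        ((a : V₁) ∈ LinearMap.range d₁ ∨ (b : V₂) ∈ LinearMap.range d₂) →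
        (Submodule.Quotient.mk (⟨(a : V₁) ⊗ₜ[ℂ] (b : V₂), h⟩ : LinearMap.ker d) :
          LinearMap.ker d ⧸ Submodule.comap (LinearMap.ker d).subtype (LinearMap.range d))
          = 0) ∧
    ∃ φ : ((LinearMap.ker d₁ ⧸ Submodule.comap (LinearMap.ker d₁).subtype (LinearMap.range d₁))
            ⊗[ℂ]
           (LinearMap.ker d₂ ⧸ Submodule.comap (LinearMap.ker d₂).subtype (LinearMap.range d₂)))
            →ₗ[ℂ]
          (LinearMap.ker d ⧸ Submodule.comap (LinearMap.ker d).subtype (LinearMap.range d)),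
      (∀ (a : LinearMap.ker d₁) (b : LinearMap.ker d₂)
          (h : (a : V₁) ⊗ₜ[ℂ] (b : V₂) ∈ LinearMap.ker d),
          φ (Submodule.Quotient.mk a ⊗ₜ[ℂ] Submodule.Quotient.mk b) =
            Submodule.Quotient.mk (⟨(a : V₁) ⊗ₜ[ℂ] (b : V₂), h⟩ : LinearMap.ker d)) ∧
      Function.Bijective φ := by
  -- Pointwise forms of the hypotheses
  have hdd₁ : ∀ x, d₁ (d₁ x) = 0 := fun x => LinearMap.congr_fun hd₁ x
  have hdd₂ : ∀ x, d₂ (d₂ x) = 0 := by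
    intro x
    have := LinearMap.ext_iff.mp hd₂ x
    simpa using this
  have hεε : ∀ x, ε (ε x) = x := fun x => LinearMap.congr_fun hε x
  have hεd' : ∀ x, ε (d₁ x) = - d₁ (ε x) := fun x => LinearMap.congr_fun hεd x
  have hdε : ∀ x, d₁ (ε x) = - ε (d₁ x) := fun x => by rw [hεd' x, neg_neg]
  -- homotopies
  obtain ⟨h₁', p₁', hF1', hF2', hF3'⟩ := exists_homotopy d₁ hdd₁
  obtain ⟨h₂, p₂, hF1₂, hF2₂, hF3₂⟩ := exists_homotopy d₂ hdd₂
  -- symmetrized homotopy for d₁, compatible with ε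
  set h₁ : V₁ →ₗ[ℂ] V₁ := (2⁻¹ : ℂ) • (h₁' - ε ∘ₗ h₁' ∘ₗ ε) with hh₁def
  set p₁ : V₁ →ₗ[ℂ] V₁ := (2⁻¹ : ℂ) • (p₁' + ε ∘ₗ p₁' ∘ₗ ε) with hp₁def
  have hF1 : ∀ x, d₁ (p₁ x) = 0 := by
    intro x
    simp only [hp₁def, LinearMap.smul_apply, LinearMap.add_apply, LinearMap.comp_apply, map_add,
      map_smul]
    rw [hF1', hdε, hF1']
    simp
  have hF2 : ∀ x, p₁ (d₁ x) = 0 := by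
    intro x
    simp only [hp₁def, LinearMap.smul_apply, LinearMap.add_apply, LinearMap.comp_apply]
    rw [hF2', hεd' x, map_neg, hF2', neg_zero, map_zero, add_zero, smul_zero]
  have hF3 : ∀ x, d₁ (h₁ x) + h₁ (d₁ x) = x - p₁ x := by
    intro x
    simp only [hh₁def, hp₁def, LinearMap.smul_apply, LinearMap.sub_apply, LinearMap.add_apply,
      LinearMap.comp_apply, map_sub, map_smul]
    rw [hdε (h₁' (ε x)), hεd' x]
    simp only [map_neg]
    have e1 : d₁ (h₁' x) = x - p₁' x - h₁' (d₁ x) := by rw [← hF3' x]; abel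
    have e2 : ε (d₁ (h₁' (ε x))) + ε (h₁' (d₁ (ε x))) = x - ε (p₁' (ε x)) := by
      rw [← map_add, hF3' (ε x), map_sub, hεε]
    have e2' : ε (d₁ (h₁' (ε x))) = x - ε (p₁' (ε x)) - ε (h₁' (d₁ (ε x))) := by
      rw [← e2]; abel
    rw [e1, e2']
    module
  have hF4 : ∀ x, ε (h₁ x) = - h₁ (ε x) := by
    intro x
    simp only [hh₁def, LinearMap.smul_apply, LinearMap.sub_apply, LinearMap.comp_apply, map_smul,
      map_sub, hεε]
    rw [← smul_neg]; congr 1; abel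
  have hF5 : ∀ x, ε (p₁ x) = p₁ (ε x) := by
    intro x
    simp only [hp₁def, LinearMap.smul_apply, LinearMap.add_apply, LinearMap.comp_apply, map_smul,
      map_add, hεε]
    congr 1; abel
  clear hF1' hF2' hF3' hh₁def hp₁def
  -- part 1 : d ∘ d = 0
  have part1 : d ∘ₗ d = 0 := by
    rw [hd]
    apply TensorProduct.ext'
    intro x y
    simp only [LinearMap.comp_apply, LinearMap.add_apply, TensorProduct.map_tmul,
      LinearMap.id_coe, id_eq, map_add, LinearMap.zero_apply]
    rw [hdd₁, hdd₂, hεd' x]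
    simp only [zero_tmul, tmul_zero, neg_tmul, add_zero, zero_add]
    abel
  have hdd : ∀ w, d (d w) = 0 := fun w => LinearMap.congr_fun part1 w
  -- part 2
  have part2 : LinearMap.range
      (TensorProduct.map (LinearMap.ker d₁).subtype (LinearMap.ker d₂).subtype) ≤
      LinearMap.ker d := by
    rw [LinearMap.range_le_ker_iff]
    apply TensorProduct.ext'
    intro a b
    simp only [LinearMap.comp_apply, TensorProduct.map_tmul, Submodule.coe_subtype,
      LinearMap.zero_apply, hd, LinearMap.add_apply, LinearMap.id_coe, id_eq]
    rw [LinearMap.mem_ker.mp a.2, LinearMap.mem_ker.mp b.2]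
    simp
  have hmem : ∀ (a : LinearMap.ker d₁) (b : LinearMap.ker d₂),
      (a : V₁) ⊗ₜ[ℂ] (b : V₂) ∈ LinearMap.ker d := by
    intro a b
    rw [LinearMap.mem_ker, hd]
    simp only [LinearMap.add_apply, TensorProduct.map_tmul, LinearMap.id_coe, id_eq]
    rw [LinearMap.mem_ker.mp a.2, LinearMap.mem_ker.mp b.2]
    simp
  -- membership of a ⊗ b in range d when a or b is a boundary
  have hrange : ∀ (a : LinearMap.ker d₁) (b : LinearMap.ker d₂),
      ((a : V₁) ∈ LinearMap.range d₁ ∨ (b : V₂) ∈ LinearMap.range d₂) →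
      (a : V₁) ⊗ₜ[ℂ] (b : V₂) ∈ LinearMap.range d := by
    rintro a b (⟨x, hx⟩ | ⟨y, hy⟩)
    · refine ⟨x ⊗ₜ (b : V₂), ?_⟩
      rw [hd]
      simp only [LinearMap.add_apply, TensorProduct.map_tmul, LinearMap.id_coe, id_eq]
      rw [hx, LinearMap.mem_ker.mp b.2]
      simp
    · refine ⟨ε (a : V₁) ⊗ₜ y, ?_⟩
      rw [hd]
      simp only [LinearMap.add_apply, TensorProduct.map_tmul, LinearMap.id_coe, id_eq]
      rw [hdε, LinearMap.mem_ker.mp a.2, hεε, hy]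
      simp
  -- part 3
  have part3 : ∀ (a : LinearMap.ker d₁) (b : LinearMap.ker d₂)
      (h : (a : V₁) ⊗ₜ[ℂ] (b : V₂) ∈ LinearMap.ker d),
      ((a : V₁) ∈ LinearMap.range d₁ ∨ (b : V₂) ∈ LinearMap.range d₂) →
      (Submodule.Quotient.mk (⟨(a : V₁) ⊗ₜ[ℂ] (b : V₂), h⟩ : LinearMap.ker d) :
        LinearMap.ker d ⧸ Submodule.comap (LinearMap.ker d).subtype (LinearMap.range d))
        = 0 := by
    intro a b h hab
    rw [Submodule.Quotient.mk_eq_zero, Submodule.mem_comap]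
    exact hrange a b hab
  refine ⟨part1, part2, part3, ?_⟩
  -- the map φ₀ : ker d₁ ⊗ ker d₂ → H(d)
  set Sd := Submodule.comap (LinearMap.ker d).subtype (LinearMap.range d) with hSddef
  set S₁ := Submodule.comap (LinearMap.ker d₁).subtype (LinearMap.range d₁) with hS₁def
  set S₂ := Submodule.comap (LinearMap.ker d₂).subtype (LinearMap.range d₂) with hS₂def
  set j : (LinearMap.ker d₁) ⊗[ℂ] (LinearMap.ker d₂) →ₗ[ℂ] (LinearMap.ker d) :=
    LinearMap.codRestrict (LinearMap.ker d)
      (TensorProduct.map (LinearMap.ker d₁).subtype (LinearMap.ker d₂).subtype)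
      (fun w => part2 (LinearMap.mem_range_self _ w)) with hjdef
  set φ₀ := Sd.mkQ ∘ₗ j with hφ₀def
  have hφ₀tmul : ∀ (a : LinearMap.ker d₁) (b : LinearMap.ker d₂),
      φ₀ (a ⊗ₜ b) = Submodule.Quotient.mk
        (⟨(a : V₁) ⊗ₜ[ℂ] (b : V₂), hmem a b⟩ : LinearMap.ker d) := by
    intro a b
    rfl
  have hφ₀kill : ∀ (a : LinearMap.ker d₁) (b : LinearMap.ker d₂),
      ((a : V₁) ∈ LinearMap.range d₁ ∨ (b : V₂) ∈ LinearMap.range d₂) →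
      φ₀ (a ⊗ₜ b) = 0 := by
    intro a b hab
    rw [hφ₀tmul a b]
    exact part3 a b (hmem a b) hab
  -- descend φ₀ to the quotients
  set c := TensorProduct.curry φ₀ with hcdef
  have hc : S₁ ≤ LinearMap.ker c := by
    intro a ha
    rw [LinearMap.mem_ker]
    apply LinearMap.ext
    intro b
    simp only [hcdef, TensorProduct.curry_apply, LinearMap.zero_apply]
    exact hφ₀kill a b (Or.inl ha)
  set Φ := S₁.liftQ c hc with hΦdef
  have hΦflip : S₂ ≤ LinearMap.ker Φ.flip := by
    intro b hb
    rw [LinearMap.mem_ker]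
    apply LinearMap.ext
    intro u
    obtain ⟨a, rfl⟩ := Submodule.Quotient.mk_surjective S₁ u
    simp only [hΦdef, LinearMap.flip_apply, Submodule.liftQ_apply, LinearMap.zero_apply, hcdef,
      TensorProduct.curry_apply]
    exact hφ₀kill a b (Or.inr hb)
  set Φ₂ := S₂.liftQ Φ.flip hΦflip with hΦ₂def
  set φ := TensorProduct.lift Φ₂.flip with hφdef
  have hφgen : ∀ (a : LinearMap.ker d₁) (b : LinearMap.ker d₂),
      φ (Submodule.Quotient.mk a ⊗ₜ[ℂ] Submodule.Quotient.mk b) =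
        Submodule.Quotient.mk
          (⟨(a : V₁) ⊗ₜ[ℂ] (b : V₂), hmem a b⟩ : LinearMap.ker d) := by
    intro a b
    rw [hφdef, TensorProduct.lift.tmul]
    simp only [LinearMap.flip_apply, hΦ₂def, Submodule.liftQ_apply, hΦdef, hcdef,
      TensorProduct.curry_apply]
    exact hφ₀tmul a b
  -- the inverse map ψ
  set r₁ : V₁ →ₗ[ℂ] (LinearMap.ker d₁) :=
    LinearMap.codRestrict (LinearMap.ker d₁) p₁ (fun x => LinearMap.mem_ker.2 (hF1 x)) with hr₁def
  set r₂ : V₂ →ₗ[ℂ] (LinearMap.ker d₂) :=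
    LinearMap.codRestrict (LinearMap.ker d₂) p₂ (fun x => LinearMap.mem_ker.2 (hF1₂ x)) with hr₂def
  set q₁ := S₁.mkQ ∘ₗ r₁ with hq₁def
  set q₂ := S₂.mkQ ∘ₗ r₂ with hq₂def
  set Q := TensorProduct.map q₁ q₂ with hQdef
  have hq₁d : ∀ x, q₁ (d₁ x) = 0 := by
    intro x
    simp only [hq₁def, LinearMap.comp_apply, Submodule.mkQ_apply]
    rw [Submodule.Quotient.mk_eq_zero]
    show r₁ (d₁ x) ∈ S₁
    have : r₁ (d₁ x) = 0 := by
      apply Subtype.ext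
      simp [hr₁def, LinearMap.codRestrict, hF2 x]
    rw [this]; exact S₁.zero_mem
  have hq₂d : ∀ y, q₂ (d₂ y) = 0 := by
    intro y
    simp only [hq₂def, LinearMap.comp_apply, Submodule.mkQ_apply]
    rw [Submodule.Quotient.mk_eq_zero]
    show r₂ (d₂ y) ∈ S₂
    have : r₂ (d₂ y) = 0 := by
      apply Subtype.ext
      simp [hr₂def, LinearMap.codRestrict, hF2₂ y]
    rw [this]; exact S₂.zero_mem
  have hQd : Q ∘ₗ d = 0 := by
    rw [hd]
    apply TensorProduct.ext'
    intro x y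
    simp only [LinearMap.comp_apply, LinearMap.add_apply, TensorProduct.map_tmul,
      LinearMap.id_coe, id_eq, map_add, LinearMap.zero_apply, hQdef]
    rw [hq₁d x, hq₂d y]
    simp
  have hψcond : Sd ≤ LinearMap.ker (Q ∘ₗ (LinearMap.ker d).subtype) := by
    intro z hz
    obtain ⟨w, hw⟩ := hz
    have hzval : ((LinearMap.ker d).subtype z : V₁ ⊗[ℂ] V₂) = d w := hw.symm
    rw [LinearMap.mem_ker, LinearMap.comp_apply, hzval]
    exact LinearMap.congr_fun hQd w
  set ψ := Sd.liftQ (Q ∘ₗ (LinearMap.ker d).subtype) hψcond with hψdef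
  -- q₁ is the identity on homology classes
  have hq₁ker : ∀ a : LinearMap.ker d₁, q₁ (a : V₁) = Submodule.Quotient.mk a := by
    intro a
    simp only [hq₁def, LinearMap.comp_apply, Submodule.mkQ_apply]
    rw [Submodule.Quotient.eq]
    show (r₁ (a : V₁) : V₁) - (a : V₁) ∈ LinearMap.range d₁
    have hval : (r₁ (a : V₁) : V₁) = p₁ (a : V₁) := by simp [hr₁def, LinearMap.codRestrict]
    refine ⟨-(h₁ (a : V₁)), ?_⟩
    have := hF3 (a : V₁)
    rw [LinearMap.mem_ker.mp a.2, map_zero, add_zero] at this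
    rw [map_neg, this, hval]
    abel
  have hq₂ker : ∀ b : LinearMap.ker d₂, q₂ (b : V₂) = Submodule.Quotient.mk b := by
    intro b
    simp only [hq₂def, LinearMap.comp_apply, Submodule.mkQ_apply]
    rw [Submodule.Quotient.eq]
    show (r₂ (b : V₂) : V₂) - (b : V₂) ∈ LinearMap.range d₂
    have hval : (r₂ (b : V₂) : V₂) = p₂ (b : V₂) := by simp [hr₂def, LinearMap.codRestrict]
    refine ⟨-(h₂ (b : V₂)), ?_⟩
    have := hF3₂ (b : V₂)
    rw [LinearMap.mem_ker.mp b.2, map_zero, add_zero] at this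
    rw [map_neg, this, hval]
    abel
  -- ψ ∘ φ = id
  have hψφ : ∀ t, ψ (φ t) = t := by
    have : ψ ∘ₗ φ = LinearMap.id := by
      apply TensorProduct.ext'
      intro u v
      obtain ⟨a, rfl⟩ := Submodule.Quotient.mk_surjective S₁ u
      obtain ⟨b, rfl⟩ := Submodule.Quotient.mk_surjective S₂ v
      rw [LinearMap.comp_apply, hφgen a b]
      simp only [hψdef, Submodule.liftQ_apply, LinearMap.comp_apply, Submodule.coe_subtype,
        LinearMap.id_apply]
      show Q ((a : V₁) ⊗ₜ (b : V₂)) = _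
      rw [hQdef, TensorProduct.map_tmul, hq₁ker a, hq₂ker b]
    intro t
    exact LinearMap.congr_fun this t
  -- the tensor projection and homotopy
  set pT := TensorProduct.map p₁ p₂ with hpTdef
  set hT := TensorProduct.map h₁ LinearMap.id + TensorProduct.map (ε ∘ₗ p₁) h₂ with hhTdef
  have hdpT : d ∘ₗ pT = 0 := by
    rw [hd, hpTdef]
    apply TensorProduct.ext'
    intro x y
    simp only [LinearMap.comp_apply, TensorProduct.map_tmul, LinearMap.add_apply,
      LinearMap.id_coe, id_eq, LinearMap.zero_apply]
    rw [hF1 x, hF1₂ y]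
    simp
  set P : V₁ ⊗[ℂ] V₂ →ₗ[ℂ] (LinearMap.ker d) :=
    LinearMap.codRestrict (LinearMap.ker d) pT
      (fun w => LinearMap.mem_ker.2 (LinearMap.congr_fun hdpT w)) with hPdef
  have hhomT : d ∘ₗ hT + hT ∘ₗ d = LinearMap.id - pT := by
    apply TensorProduct.ext'
    intro x y
    simp only [hhTdef, hpTdef, hd, LinearMap.add_apply, LinearMap.comp_apply, LinearMap.sub_apply,
      LinearMap.id_apply, TensorProduct.map_tmul, LinearMap.id_coe, id_eq, map_add]
    rw [hdε (p₁ x), hεε (p₁ x), hF4 x, hF5 (ε x), hεε x, hF1 x, hF2 x]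
    simp only [map_zero, neg_zero, zero_tmul, tmul_zero]
    have e1 : d₁ (h₁ x) = x - p₁ x - h₁ (d₁ x) := by
      rw [← hF3 x]; abel
    have e2 : d₂ (h₂ y) = y - p₂ y - h₂ (d₂ y) := by
      rw [← hF3₂ y]; abel
    rw [e1, e2]
    simp only [sub_tmul, tmul_sub, neg_tmul, zero_tmul, tmul_zero, map_zero]
    abel
  -- φ ∘ ψ = id
  have key2 : φ ∘ₗ Q = Sd.mkQ ∘ₗ P := by
    apply TensorProduct.ext'
    intro x y
    simp only [LinearMap.comp_apply, hQdef, TensorProduct.map_tmul]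
    have hx : q₁ x = Submodule.Quotient.mk (r₁ x) := by
      simp [hq₁def]
    have hy : q₂ y = Submodule.Quotient.mk (r₂ y) := by
      simp [hq₂def]
    rw [hx, hy, hφgen (r₁ x) (r₂ y)]
    rfl
  have hφψ : ∀ u, φ (ψ u) = u := by
    intro u
    obtain ⟨z, rfl⟩ := Submodule.Quotient.mk_surjective Sd u
    have : ψ (Submodule.Quotient.mk z) = Q (z : V₁ ⊗[ℂ] V₂) := by
      simp [hψdef]
    rw [this]
    have := LinearMap.congr_fun key2 (z : V₁ ⊗[ℂ] V₂)
    rw [LinearMap.comp_apply, LinearMap.comp_apply] at this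
    rw [this, Submodule.mkQ_apply, Submodule.Quotient.eq]
    show (P (z : V₁ ⊗[ℂ] V₂) : V₁ ⊗[ℂ] V₂) - (z : V₁ ⊗[ℂ] V₂) ∈ LinearMap.range d
    have hval : (P (z : V₁ ⊗[ℂ] V₂) : V₁ ⊗[ℂ] V₂) = pT (z : V₁ ⊗[ℂ] V₂) := by
      simp [hPdef, LinearMap.codRestrict]
    refine ⟨-(hT (z : V₁ ⊗[ℂ] V₂)), ?_⟩
    have hz := LinearMap.congr_fun hhomT (z : V₁ ⊗[ℂ] V₂)
    simp only [LinearMap.add_apply, LinearMap.comp_apply, LinearMap.sub_apply,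
      LinearMap.id_apply] at hz
    rw [LinearMap.mem_ker.mp z.2, map_zero, add_zero] at hz
    rw [map_neg, hz, hval]
    abel
  refine ⟨φ, ?_, ?_⟩
  · intro a b h
    exact hφgen a b
  · exact Function.bijective_iff_has_inverse.2 ⟨ψ, hψφ, hφψ⟩
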